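/- Let γ be a permutation word of Σ. Then for every word w over Σ and every c ∈ ℕ, ι(γ^c · w) = c + ι(w), where γ^c denotes the c-fold concatenation of γ. -/

import Mathlib

open List

section Defs

variable {α : Type*}

/-- A word `w` is `k`-universal if every word of length at most `k` is a subsequence of `w`. -/
def IsKUniversal [Fintype α] (k : ℕ) (w : List α) : Prop :=
  ∀ u : List α, u.length ≤ k → u.Sublist w

/-- The universality index `ι(w)`: the largest `k` such that `w` is `k`-universal. -/
noncomputable def univIndex [Fintype α] (w : List α) : ℕ :=
  sSup {k | IsKUniversal k w}

/-- `c`-fold concatenation (power) of a word. -/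
def wpow (u : List α) (c : ℕ) : List α := (List.replicate c u).flatten

/-- Auxiliary (fuelled) computation of the arch factorization: returns the list of
arches and the rest. Each arch is the shortest prefix of the remaining suffix
containing every letter of the alphabet. -/
noncomputable def archFactAux [Fintype α] [DecidableEq α] :
    ℕ → List α → List (List α) × List α
  | 0, w => ([], w)
  | fuel + 1, w =>
    if Finset.univ ⊆ w.toFinset then
      let n := sInf {n | Finset.univ ⊆ (w.take n).toFinset}
      let p := archFactAux fuel (w.drop n)
      (w.take n :: p.1, p.2)
    else ([], w)

/-- The arch factorization of `w`: the list of arches together with the rest. -/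
noncomputable def archFact [Fintype α] [DecidableEq α] (w : List α) :
    List (List α) × List α :=
  archFactAux w.length w

/-- `γ(w)`: the distinct letters of `w` in order of their first occurrence. -/
def gammaWord [DecidableEq α] (w : List α) : List α := w.reverse.dedup.reverse

/-- The suffix of `w` strictly after the first occurrence of the letter `a`. -/
def afterFirst [DecidableEq α] (a : α) (w : List α) : List α :=
  w.drop (w.idxOf a + 1)

/-- `ι_a(w)`: the universality index of the suffix of `w` after the first occurrence of `a`. -/
noncomputable def iotaLetter [Fintype α] [DecidableEq α] (a : α) (w : List α) : ℕ :=
  univIndex (afterFirst a w)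

/-- `R_a(w)`: the alphabet of the rest of the arch factorization of the suffix of `w`
after the first occurrence of `a`. -/
noncomputable def restLetter [Fintype α] [DecidableEq α] (a : α) (w : List α) : Finset α :=
  ((archFact (afterFirst a w)).2).toFinset

/-- `Subseq_k(w)`: the set of subsequences of `w` of length at most `k`. -/
def subseqK (k : ℕ) (w : List α) : Set (List α) :=
  {u | u.length ≤ k ∧ u.Sublist w}

/-- Simon's congruence `u ∼_k v`. -/
def SimonCongr (k : ℕ) (u v : List α) : Prop := subseqK k u = subseqK k v

/-- Applying a substitution `h` to a pattern: replace each variable occurrence by its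
image and leave terminal letters unchanged. -/
def applySub {X : Type*} (h : X → List α) (p : List (α ⊕ X)) : List α :=
  p.flatMap (Sum.elim (fun a => [a]) h)

/-- A permutation word of the alphabet: every letter occurs exactly once. -/
def IsPermWord [DecidableEq α] (γ : List α) : Prop :=
  ∀ a : α, γ.count a = 1

end Defs

section Aux

variable {α : Type*} [Fintype α] [DecidableEq α] [Nonempty α]

lemma isK_zero (w : List α) : IsKUniversal 0 w := by
  intro u hu
  rw [Nat.le_zero, List.length_eq_zero_iff] at hu
  simp [hu]

lemma bddS (w : List α) : BddAbove {k | IsKUniversal k w} := by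
  refine ⟨w.length, fun k hk => ?_⟩
  have a := Classical.arbitrary α
  have := hk (List.replicate k a) (by simp)
  simpa using this.length_le

lemma isK_univIndex (w : List α) : IsKUniversal (univIndex w) w :=
  Nat.sSup_mem ⟨0, isK_zero w⟩ (bddS w)

lemma le_univIndex {k : ℕ} {w : List α} (h : IsKUniversal k w) : k ≤ univIndex w :=
  le_csSup (bddS w) h

lemma step {γ : List α} (hγ : IsPermWord γ) (w : List α) (k : ℕ) :
    IsKUniversal (k + 1) (γ ++ w) ↔ IsKUniversal k w := by
  constructor
  · intro h u hu
    have hne : γ ≠ [] := by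
      have a := Classical.arbitrary α
      have h1 : γ.count a = 1 := hγ a
      intro h0; simp [h0] at h1
    set a := γ.getLast hne with ha
    have hγeq : γ.dropLast ++ [a] = γ := List.dropLast_append_getLast hne
    have hnot : a ∉ γ.dropLast := by
      have h1 : γ.count a = 1 := hγ a
      intro hm
      rw [← hγeq] at h1
      simp [List.count_append, List.count_eq_zero] at h1
      exact h1 hm
    have hsub : (a :: u).Sublist (γ ++ w) := h (a :: u) (by simpa using hu)
    rw [List.sublist_append_iff] at hsub
    obtain ⟨l1, l2, heq, h1, h2⟩ := hsub
    cases l1 with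
    | nil =>
      simp only [List.nil_append] at heq
      exact (List.sublist_cons_self a u).trans (heq ▸ h2)
    | cons b l1' =>
      simp only [List.cons_append, List.cons.injEq] at heq
      obtain ⟨rfl, rfl⟩ := heq
      rw [← hγeq, List.sublist_append_iff] at h1
      obtain ⟨m1, m2, heq2, hm1, hm2⟩ := h1
      cases m1 with
      | cons c m1' =>
        simp only [List.cons_append, List.cons.injEq] at heq2
        exact absurd (hm1.subset (heq2.1 ▸ List.mem_cons_self (a := c) (l := m1'))) hnot
      | nil =>
        simp only [List.nil_append] at heq2
        have : l1' = [] := by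
          have := hm2.length_le
          rw [← heq2] at this
          simp at this
          exact this
        subst this
        simpa using h2
  · intro h u hu
    cases u with
    | nil => exact List.nil_sublist _
    | cons b u' =>
      have hb : [b].Sublist γ := List.singleton_sublist.mpr (by
        rw [← List.count_pos_iff]; simp [hγ b])
      have hu' : u'.Sublist w := h u' (by simpa using Nat.succ_le_succ_iff.mp hu)
      exact (hb.append hu' : ([b] ++ u').Sublist (γ ++ w))

lemma univIndex_perm_append {γ : List α} (hγ : IsPermWord γ) (w : List α) :
    univIndex (γ ++ w) = univIndex w + 1 := by
  apply Nat.le_antisymm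
  · have h0 : IsKUniversal 1 (γ ++ w) := (step hγ w 0).mpr (isK_zero w)
    have hm : 1 ≤ univIndex (γ ++ w) := le_univIndex h0
    obtain ⟨m, hmeq⟩ : ∃ m, univIndex (γ ++ w) = m + 1 :=
      ⟨_, (Nat.succ_pred_eq_of_pos hm).symm⟩
    have := isK_univIndex (γ ++ w)
    rw [hmeq] at this ⊢
    exact Nat.succ_le_succ (le_univIndex ((step hγ w m).mp this))
  · exact le_univIndex ((step hγ w _).mpr (isK_univIndex w))

end Aux

/-- prepending `c` copies of a permutation word increases the
universality index by exactly `c`. -/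
theorem stmt14 {α : Type*} [Fintype α] [DecidableEq α] [Nonempty α]
    (γ : List α) (hγ : IsPermWord γ) (w : List α) (c : ℕ) :
    univIndex (wpow γ c ++ w) = c + univIndex w := by
  induction c with
  | zero => simp [wpow]
  | succ c ih =>
    have : wpow γ (c + 1) ++ w = γ ++ (wpow γ c ++ w) := by
      simp [wpow, List.replicate_succ]
    rw [this, univIndex_perm_append hγ, ih]
    ring
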